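/- arXiv:2106.11553 — 4 statements merged into one kernel-verified Lean document; each statement's English description precedes it below -/
import Mathlib

section
/- Let Z be a finite abelian group and let (A₁,B₁,(·,·)₁), (A₂,B₂,(·,·)₂), α, β form a commutative diagram of pairings valued in Z, with induced Coker–Ker pairing (·,·)_{CK} : Coker(α) × Ker(β) → Z. Suppose that the quotient map π: A₂ → Coker(α) splits, i.e. there is a continuous group homomorphism s: Coker(α) → A₂ with π ∘ s = id, that the right kernel of (·,·)₁ is trivial, and that (·,·)₂ is right-surjective. Then (·,·)_{CK} is right-surjective: for every continuous homomorphism λ₀: Coker(α) → Z there exists b ∈ Ker(β) with λ₀(x) = (x, b)_{CK} for all x ∈ Coker(α). -/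
/-- For a commutative diagram of pairings valued in a finite abelian
group `Z`: if the quotient map `π : A₂ → Coker(α)` splits by a continuous homomorphism
`s`, the right kernel of the first pairing is trivial, and the second pairing is
right-surjective, then the induced Coker–Ker pairing `F` is right-surjective: every
continuous homomorphism `λ₀ : Coker(α) → Z` is of the form `λ₀ = F · b` for some
`b ∈ Ker(β)`. -/
theorem stmt_2 {Z A₁ B₁ A₂ B₂ : Type*}
    [AddCommGroup Z] [Finite Z] [TopologicalSpace Z] [DiscreteTopology Z]
    [AddCommGroup A₁] [TopologicalSpace A₁] [IsTopologicalAddGroup A₁]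
    [CompactSpace A₁] [T2Space A₁] [TotallyDisconnectedSpace A₁]
    [AddCommGroup A₂] [TopologicalSpace A₂] [IsTopologicalAddGroup A₂]
    [CompactSpace A₂] [T2Space A₂] [TotallyDisconnectedSpace A₂]
    [AddCommGroup B₁] [AddCommGroup B₂]
    (f₁ : A₁ → B₁ → Z) (f₂ : A₂ → B₂ → Z)
    (hf₁add_left : ∀ a a' b, f₁ (a + a') b = f₁ a b + f₁ a' b)
    (hf₁add_right : ∀ a b b', f₁ a (b + b') = f₁ a b + f₁ a b')
    (hf₁cont : ∀ b, Continuous fun a => f₁ a b)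
    (hf₂add_left : ∀ a a' b, f₂ (a + a') b = f₂ a b + f₂ a' b)
    (hf₂add_right : ∀ a b b', f₂ a (b + b') = f₂ a b + f₂ a b')
    (hf₂cont : ∀ b, Continuous fun a => f₂ a b)
    (α : A₁ →+ A₂) (hαcont : Continuous α) (β : B₂ →+ B₁)
    (hcomm : ∀ a b, f₁ a (β b) = f₂ (α a) b)
    (s : (A₂ ⧸ α.range) →+ A₂) (hscont : Continuous s)
    (hsplit : ∀ x : A₂ ⧸ α.range, QuotientAddGroup.mk (s x) = x)
    (hf₁_right_ker : ∀ b : B₁, (∀ a : A₁, f₁ a b = 0) → b = 0)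
    (hf₂_right_surj : ∀ φ : A₂ → Z, (∀ a a', φ (a + a') = φ a + φ a') → Continuous φ →
      ∃ b : B₂, ∀ a, φ a = f₂ a b) :
    ∀ F : (A₂ ⧸ α.range) → β.ker → Z,
      (∀ (a : A₂) (b : β.ker), F (QuotientAddGroup.mk a) b = f₂ a b) →
      ∀ lam₀ : (A₂ ⧸ α.range) → Z,
        (∀ x y, lam₀ (x + y) = lam₀ x + lam₀ y) → Continuous lam₀ →
        ∃ b : β.ker, ∀ x, lam₀ x = F x b := by

  intro F hF lam₀ hadd hcont
  -- pull back lam₀ along the quotient map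
  obtain ⟨b₂, hb₂⟩ := hf₂_right_surj (fun a => lam₀ (QuotientAddGroup.mk a))
    (fun a a' => hadd a a')
    (hcont.comp continuous_quot_mk)
  have h0 : lam₀ 0 = 0 := by
    have := hadd 0 0; simpa using this.symm
  have hker : β b₂ = 0 := by
    apply hf₁_right_ker
    intro a
    rw [hcomm, ← hb₂]
    have : (QuotientAddGroup.mk (α a) : A₂ ⧸ α.range) = 0 := by
      rw [QuotientAddGroup.eq_zero_iff]; exact ⟨a, rfl⟩
    rw [this, h0]
  refine ⟨⟨b₂, hker⟩, fun x => ?_⟩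
  have := hF (s x) ⟨b₂, hker⟩
  rw [hsplit] at this
  rw [this, ← hb₂, hsplit]
end

section
/- Let p be a prime, Z = Z/p, and let (A₁,B₁,(·,·)₁), (A₂,B₂,(·,·)₂), α, β form a commutative diagram of pairings valued in Z/p, where the groups A₁, A₂, B₁, B₂ all have exponent p. Assume that the right kernel of (·,·)₁ is trivial and that (·,·)₂ is perfect. Then the induced Coker–Ker pairing (·,·)_{CK} : Coker(α) × Ker(β) → Z/p is perfect, i.e. the induced maps Coker(α) → Hom(Ker(β), Z/p) and Ker(β) → Hom_cont(Coker(α), Z/p) are both bijective. -/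
lemma sep_char (p : ℕ) (hp : p.Prime) {A : Type*} [AddCommGroup A] [TopologicalSpace A]
    [IsTopologicalAddGroup A] [CompactSpace A] [T2Space A] [TotallyDisconnectedSpace A]
    (hexp : ∀ a : A, p • a = 0) (C : AddSubgroup A) (hC : IsClosed (C : Set A))
    {a : A} (ha : a ∉ C) :
    ∃ φ : A →+ ZMod p, Continuous φ ∧ (∀ c ∈ C, φ c = 0) ∧ φ a ≠ 0 := by
  haveI : Fact p.Prime := ⟨hp⟩
  have hScompact : IsCompact ((fun c => a - c) '' (C : Set A)) :=
    hC.isCompact.image (by continuity)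
  have h0 : (0 : A) ∈ ((fun c => a - c) '' (C : Set A))ᶜ := by
    rintro ⟨c, hc, hc0⟩
    rw [sub_eq_zero] at hc0
    exact ha (hc0 ▸ hc)
  obtain ⟨V, hVclopen, hV0, hVsub⟩ :=
    compact_exists_isClopen_in_isOpen hScompact.isClosed.isOpen_compl h0
  obtain ⟨U, hU⟩ :=
    IsTopologicalAddGroup.exist_openAddSubgroup_sub_clopen_nhds_of_zero hVclopen hV0
  set N : AddSubgroup A := U.toAddSubgroup ⊔ C with hN
  have haN : a ∉ N := by
    intro h
    obtain ⟨u, hu, c, hc, huc⟩ := (AddSubgroup.mem_sup).mp h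
    have h1 : a - c ∈ V := by
      have : a - c = u := by rw [← huc]; abel
      exact this ▸ hU hu
    exact hVsub h1 ⟨c, hc, rfl⟩
  haveI : Module (ZMod p) (A ⧸ N) :=
    QuotientAddGroup.zmodModule (fun x => by rw [hexp x]; exact N.zero_mem)
  have hQa : (QuotientAddGroup.mk a : A ⧸ N) ≠ 0 := by
    simpa [QuotientAddGroup.eq_zero_iff] using haN
  obtain ⟨ψ, hψ⟩ := (not_forall.mp
    (fun h => hQa ((Module.forall_dual_apply_eq_zero_iff (ZMod p) _).mp h)))
  have hker : ∀ x ∈ N, ψ (QuotientAddGroup.mk x : A ⧸ N) = 0 := by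
    intro x hx
    rw [(QuotientAddGroup.eq_zero_iff x).mpr hx, map_zero]
  refine ⟨ψ.toAddMonoidHom.comp (QuotientAddGroup.mk' N), ?_, ?_, hψ⟩
  · apply continuous_of_continuousAt_zero
    rw [ContinuousAt]
    have h2 : ∀ᶠ x in nhds (0 : A),
        (fun _ : A => (ψ.toAddMonoidHom.comp (QuotientAddGroup.mk' N)) 0) x =
        (ψ.toAddMonoidHom.comp (QuotientAddGroup.mk' N)) x := by
      filter_upwards [U.mem_nhds_zero] with x hx
      simp only [AddMonoidHom.comp_apply, map_zero, LinearMap.toAddMonoidHom_coe,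
        QuotientAddGroup.mk'_apply]
      exact (hker x (AddSubgroup.mem_sup_left hx)).symm
    exact Filter.Tendsto.congr' h2 tendsto_const_nhds
  · intro c hc
    exact hker c (AddSubgroup.mem_sup_right hc)

/-- For a commutative diagram of pairings valued in `ZMod p` (`p` prime)
between groups of exponent `p`: if the right kernel of the first pairing is trivial and
the second pairing is perfect, then the induced Coker–Ker pairing `F` is perfect, i.e.
the induced maps `Coker(α) → Hom(Ker(β), ZMod p)` and
`Ker(β) → Hom_cont(Coker(α), ZMod p)` are both bijective. -/
theorem stmt_3 (p : ℕ) (hp : p.Prime)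
    {A₁ B₁ A₂ B₂ : Type*}
    [AddCommGroup A₁] [TopologicalSpace A₁] [IsTopologicalAddGroup A₁]
    [CompactSpace A₁] [T2Space A₁] [TotallyDisconnectedSpace A₁]
    [AddCommGroup A₂] [TopologicalSpace A₂] [IsTopologicalAddGroup A₂]
    [CompactSpace A₂] [T2Space A₂] [TotallyDisconnectedSpace A₂]
    [AddCommGroup B₁] [AddCommGroup B₂]
    (hA₁exp : ∀ a : A₁, p • a = 0) (hA₂exp : ∀ a : A₂, p • a = 0)
    (hB₁exp : ∀ b : B₁, p • b = 0) (hB₂exp : ∀ b : B₂, p • b = 0)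
    (f₁ : A₁ → B₁ → ZMod p) (f₂ : A₂ → B₂ → ZMod p)
    (hf₁add_left : ∀ a a' b, f₁ (a + a') b = f₁ a b + f₁ a' b)
    (hf₁add_right : ∀ a b b', f₁ a (b + b') = f₁ a b + f₁ a b')
    (hf₁cont : ∀ b, Continuous fun a => f₁ a b)
    (hf₂add_left : ∀ a a' b, f₂ (a + a') b = f₂ a b + f₂ a' b)
    (hf₂add_right : ∀ a b b', f₂ a (b + b') = f₂ a b + f₂ a b')
    (hf₂cont : ∀ b, Continuous fun a => f₂ a b)
    (α : A₁ →+ A₂) (hαcont : Continuous α) (β : B₂ →+ B₁)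
    (hcomm : ∀ a b, f₁ a (β b) = f₂ (α a) b)
    (hf₁_right_ker : ∀ b : B₁, (∀ a : A₁, f₁ a b = 0) → b = 0)
    (hf₂_left_inj : ∀ a : A₂, (∀ b, f₂ a b = 0) → a = 0)
    (hf₂_left_surj : ∀ χ : B₂ → ZMod p, (∀ b b', χ (b + b') = χ b + χ b') →
      ∃ a : A₂, ∀ b, χ b = f₂ a b)
    (hf₂_right_inj : ∀ b : B₂, (∀ a, f₂ a b = 0) → b = 0)
    (hf₂_right_surj : ∀ φ : A₂ → ZMod p, (∀ a a', φ (a + a') = φ a + φ a') → Continuous φ →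
      ∃ b : B₂, ∀ a, φ a = f₂ a b) :
    ∀ F : (A₂ ⧸ α.range) → β.ker → ZMod p,
      (∀ (a : A₂) (b : β.ker), F (QuotientAddGroup.mk a) b = f₂ a b) →
      -- the induced map `Coker(α) → Hom(Ker(β), ZMod p)` is bijective:
      ((∀ x y : A₂ ⧸ α.range, (∀ b, F x b = F y b) → x = y) ∧
       (∀ χ : β.ker → ZMod p, (∀ b b', χ (b + b') = χ b + χ b') →
         ∃ x : A₂ ⧸ α.range, ∀ b, χ b = F x b) ∧
      -- the induced map `Ker(β) → Hom_cont(Coker(α), ZMod p)` is bijective: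
       (∀ b b' : β.ker, (∀ x, F x b = F x b') → b = b') ∧
       (∀ φ : (A₂ ⧸ α.range) → ZMod p, (∀ x y, φ (x + y) = φ x + φ y) → Continuous φ →
         ∃ b : β.ker, ∀ x, φ x = F x b)) := by
  intro F hF
  haveI : Fact p.Prime := ⟨hp⟩
  haveI : Module (ZMod p) B₂ := AddCommGroup.zmodModule hB₂exp
  have hsub₂left : ∀ a a' b, f₂ (a - a') b = f₂ a b - f₂ a' b := by
    intro a a' b
    have := hf₂add_left (a - a') a' b
    rw [sub_add_cancel] at this
    linear_combination -this
  have hsub₂right : ∀ a b b', f₂ a (b - b') = f₂ a b - f₂ a b' := by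
    intro a b b'
    have := hf₂add_right a (b - b') b'
    rw [sub_add_cancel] at this
    linear_combination -this
  have hrangeClosed : IsClosed ((α.range : AddSubgroup A₂) : Set A₂) := by
    have : IsCompact (Set.range α) := isCompact_range hαcont
    simpa [AddMonoidHom.coe_range] using this.isClosed
  refine ⟨?_, ?_, ?_, ?_⟩
  · -- left injectivity
    intro x y h
    obtain ⟨a, rfl⟩ := QuotientAddGroup.mk_surjective x
    obtain ⟨a', rfl⟩ := QuotientAddGroup.mk_surjective y
    rw [QuotientAddGroup.eq]
    by_contra hmem
    have hmem' : a - a' ∉ α.range := by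
      intro h'
      apply hmem
      have := (neg_mem h' : -(a - a') ∈ α.range)
      rwa [neg_sub, sub_eq_neg_add] at this
    obtain ⟨φ, hφcont, hφ0, hφa⟩ := sep_char p hp hA₂exp α.range hrangeClosed hmem'
    obtain ⟨b, hb⟩ := hf₂_right_surj φ (by intro u v; rw [map_add]) hφcont
    have hbker : b ∈ β.ker := by
      rw [AddMonoidHom.mem_ker]
      apply hf₁_right_ker
      intro a₁
      rw [hcomm, ← hb, hφ0 _ ⟨a₁, rfl⟩]
    have := h ⟨b, hbker⟩
    rw [hF, hF] at this
    apply hφa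
    rw [hb, hsub₂left, this, sub_self]
  · -- surjectivity onto Hom(ker β, Z)
    intro χ hχ
    set S : Submodule (ZMod p) B₂ := AddSubgroup.toZModSubmodule p β.ker with hS
    have hmemS : ∀ s : S, (s : B₂) ∈ β.ker := fun s => s.2
    let χ' : S →ₗ[ZMod p] ZMod p :=
      AddMonoidHom.toZModLinearMap p
        (AddMonoidHom.mk' (fun s => χ ⟨s.1, hmemS s⟩)
          (by
            intro s t
            have h' : (⟨(s + t).1, hmemS (s + t)⟩ : β.ker) = ⟨s.1, hmemS s⟩ + ⟨t.1, hmemS t⟩ :=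
              Subtype.ext rfl
            show χ ⟨(s + t).1, hmemS (s + t)⟩ = χ ⟨s.1, hmemS s⟩ + χ ⟨t.1, hmemS t⟩
            rw [h', hχ]))
    obtain ⟨g, hg⟩ := LinearMap.exists_extend χ'
    obtain ⟨a, ha⟩ := hf₂_left_surj g (by intro u v; rw [map_add])
    refine ⟨QuotientAddGroup.mk a, ?_⟩
    intro b
    have h1 : χ b = g b.1 := by
      have := congrFun (congrArg DFunLike.coe hg) ⟨b.1, b.2⟩
      simpa [χ'] using this.symm
    rw [hF, h1, ha]
  · -- right injectivity
    intro b b' h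
    ext
    have : ∀ a : A₂, f₂ a (b.1 - b'.1) = 0 := by
      intro a
      rw [hsub₂right]
      have := h (QuotientAddGroup.mk a)
      rw [hF, hF] at this
      rw [this, sub_self]
    have := hf₂_right_inj _ this
    rwa [sub_eq_zero] at this
  · -- surjectivity onto Hom_cont(Coker, Z)
    intro φ hφadd hφcont
    have hφ0 : φ 0 = 0 := by
      have := hφadd 0 0
      simpa using this.symm
    obtain ⟨b, hb⟩ := hf₂_right_surj (fun a => φ (QuotientAddGroup.mk a))
      (by intro a a'; rw [← hφadd]; rfl)
      (hφcont.comp continuous_quot_mk)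
    have hbker : b ∈ β.ker := by
      rw [AddMonoidHom.mem_ker]
      apply hf₁_right_ker
      intro a₁
      rw [hcomm, ← hb]
      have : (QuotientAddGroup.mk (α a₁) : A₂ ⧸ α.range) = 0 :=
        (QuotientAddGroup.eq_zero_iff _).mpr ⟨a₁, rfl⟩
      rw [this, hφ0]
    refine ⟨⟨b, hbker⟩, ?_⟩
    intro x
    obtain ⟨a, rfl⟩ := QuotientAddGroup.mk_surjective x
    rw [hF, ← hb]
end

section
/- Let G be a profinite group, N a closed normal subgroup of G, and m ≥ 2 an integer. Let D be the topological closure in G of the subgroup generated by {nᵐ : n ∈ N} ∪ {[g,n] : g ∈ G, n ∈ N}; then D is a closed normal subgroup of G contained in N. Let H be the abelian group of continuous homomorphisms φ: N → Z/m satisfying φ(g n g⁻¹) = φ(n) for all g ∈ G, n ∈ N. Then the substitution pairing N/D × H → Z/m, (nD, φ) ↦ φ(n), is well defined and perfect: the induced maps N/D → Hom(H, Z/m) and H → Hom_cont(N/D, Z/m) are both bijective. -/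
open scoped DirectSum

private lemma zmod_hom_exists {q m : ℕ} (hq : q ∣ m) (hm : m ≠ 0) :
    ∃ f : ZMod q →+ ZMod m, ∀ a : ZMod q, a ≠ 0 → f a ≠ 0 := by
  have hq0 : q ≠ 0 := by rintro rfl; exact hm (Nat.zero_dvd.mp hq)
  haveI : NeZero q := ⟨hq0⟩
  set g : ℤ →+ ZMod m := (AddMonoidHom.mulRight ((m / q : ℕ) : ZMod m)).comp
    (Int.castAddHom (ZMod m)) with hg
  have hgq : g q = 0 := by
    simp only [hg, AddMonoidHom.comp_apply, Int.coe_castAddHom, AddMonoidHom.coe_mulRight]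
    push_cast
    rw [← Nat.cast_mul, Nat.mul_div_cancel' hq, ZMod.natCast_self]
  refine ⟨ZMod.lift q ⟨g, hgq⟩, fun a ha => ?_⟩
  have hval : a = ((a.val : ℤ) : ZMod q) := by
    push_cast
    exact (ZMod.natCast_rightInverse a).symm
  rw [hval, ZMod.lift_coe]
  simp only [hg, AddMonoidHom.comp_apply, Int.coe_castAddHom, AddMonoidHom.coe_mulRight]
  push_cast
  rw [← Nat.cast_mul]
  rw [Ne, ZMod.natCast_eq_zero_iff]
  intro hdvd
  have hv0 : a.val ≠ 0 := fun h => ha (by rwa [ZMod.val_eq_zero] at h)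
  have h1 : 0 < m / q := Nat.div_pos (Nat.le_of_dvd (Nat.pos_of_ne_zero hm) hq) (Nat.pos_of_ne_zero hq0)
  have h2 : a.val * (m / q) < m := by
    calc a.val * (m / q) < q * (m / q) := by
          exact (Nat.mul_lt_mul_right h1).mpr (ZMod.val_lt a)
      _ = m := Nat.mul_div_cancel' hq
  have := Nat.le_of_dvd (Nat.pos_of_ne_zero (by positivity)) hdvd
  omega

private lemma exists_addHom_ne_zero {A : Type*} [AddCommGroup A] [Finite A] {m : ℕ} (hm : m ≠ 0)
    (htor : ∀ a : A, m • a = 0) {a : A} (ha : a ≠ 0) : ∃ f : A →+ ZMod m, f a ≠ 0 := by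
  classical
  obtain ⟨ι, _, n, hn, ⟨e⟩⟩ := AddCommGroup.equiv_directSum_zmod_of_finite' A
  have hea : e a ≠ 0 := fun h => ha (by simpa using congrArg e.symm h)
  obtain ⟨i, hi⟩ : ∃ i, e a i ≠ 0 := by
    by_contra h
    push_neg at h
    exact hea (DFinsupp.ext fun i => by simpa using h i)
  haveI : NeZero (n i) := ⟨by have := hn i; omega⟩
  let comp : (⨁ j, ZMod (n j)) →+ ZMod (n i) :=
    { toFun := fun v => v i
      map_zero' := rfl
      map_add' := fun v w => by simp [DirectSum.add_apply] }
  have htori : ∀ z : ZMod (n i), m • z = 0 := by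
    intro z
    have h0 : m • e.symm (DirectSum.of (fun j => ZMod (n j)) i z) = 0 := htor _
    have h2 := congrArg e h0
    rw [map_nsmul, e.apply_symm_apply, map_zero] at h2
    have h3 := congrArg comp h2
    rw [map_nsmul comp, map_zero] at h3
    have h4 : m • (DirectSum.of (fun j => ZMod (n j)) i z) i = 0 := h3
    simpa [DirectSum.of_eq_same] using h4
  have hdvd : n i ∣ m := by
    have := htori 1
    rwa [nsmul_eq_mul, mul_one, ZMod.natCast_eq_zero_iff] at this
  obtain ⟨f, hf⟩ := zmod_hom_exists hdvd hm
  refine ⟨(f.comp comp).comp e.toAddMonoidHom, ?_⟩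
  exact hf _ hi

open scoped Pointwise

section Aux

variable {G : Type*} [Group G] [TopologicalSpace G] [IsTopologicalGroup G]
    [CompactSpace G] [T2Space G]

private lemma phi_one {m : ℕ} {H : Type*} [Group H] (φ : H → ZMod m)
    (hadd : ∀ a b : H, φ (a * b) = φ a + φ b) : φ 1 = 0 := by
  have := hadd 1 1
  rw [mul_one] at this
  exact (left_eq_add.mp this)

private lemma phi_inv {m : ℕ} {H : Type*} [Group H] (φ : H → ZMod m)
    (hadd : ∀ a b : H, φ (a * b) = φ a + φ b) (a : H) : φ a⁻¹ = -φ a := by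
  have := hadd a a⁻¹
  rw [mul_inv_cancel, phi_one φ hadd] at this
  exact eq_neg_of_add_eq_zero_right this.symm

private lemma phi_pow {m : ℕ} {H : Type*} [Group H] (φ : H → ZMod m)
    (hadd : ∀ a b : H, φ (a * b) = φ a + φ b) (a : H) (k : ℕ) : φ (a ^ k) = k • φ a := by
  induction k with
  | zero => simpa using phi_one φ hadd
  | succ n ih => rw [pow_succ, hadd, ih, succ_nsmul]

/-- Any `φ ∈ Hset` vanishes on `D`. -/
private lemma vanishes_on_D (N : Subgroup G) [N.Normal] (hNclosed : IsClosed (N : Set G))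
    {m : ℕ} (φ : ↥N → ZMod m)
    (hadd : ∀ a b : ↥N, φ (a * b) = φ a + φ b)
    (hcont : Continuous φ)
    (hinv : ∀ (g : G) (a b : ↥N), (b : G) = g * (a : G) * g⁻¹ → φ b = φ a)
    {x : ↥N}
    (hx : (x : G) ∈ (Subgroup.closure ({x : G | ∃ n ∈ N, x = n ^ m} ∪
        {x : G | ∃ g : G, ∃ n ∈ N, x = g * n * g⁻¹ * n⁻¹})).topologicalClosure) :
    φ x = 0 := by
  haveI : CompactSpace ↥N := isCompact_iff_compactSpace.mp hNclosed.isCompact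
  set ker : Subgroup ↥N :=
    { carrier := {a : ↥N | φ a = 0}
      one_mem' := phi_one φ hadd
      mul_mem' := fun ha hb => by simp only [Set.mem_setOf_eq] at *; rw [hadd]; rw [ha, hb, add_zero]
      inv_mem' := fun ha => by
        simp only [Set.mem_setOf_eq] at *
        rw [phi_inv φ hadd]; rw [ha, neg_zero] } with hker
  set K : Subgroup G := ker.map N.subtype with hK
  have hKclosed : IsClosed (K : Set G) := by
    have hkerc : IsCompact (ker : Set ↥N) :=
      (IsClosed.preimage hcont isClosed_singleton).isCompact
    have : IsCompact (K : Set G) := by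
      have := hkerc.image continuous_subtype_val
      simpa [hK, Subgroup.coe_map] using this
    exact this.isClosed
  have hsub : ({x : G | ∃ n ∈ N, x = n ^ m} ∪
      {x : G | ∃ g : G, ∃ n ∈ N, x = g * n * g⁻¹ * n⁻¹}) ⊆ (K : Set G) := by
    rintro y (⟨n, hn, rfl⟩ | ⟨g, n, hn, rfl⟩)
    · refine ⟨(⟨n, hn⟩ : ↥N) ^ m, ?_, by simp⟩
      show φ _ = 0
      rw [phi_pow φ hadd, nsmul_eq_mul, ZMod.natCast_self, zero_mul]
    · have hgn : g * n * g⁻¹ ∈ N := by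
        simpa using ‹N.Normal›.conj_mem n hn g
      refine ⟨(⟨g * n * g⁻¹, hgn⟩ : ↥N) * (⟨n, hn⟩ : ↥N)⁻¹, ?_, by simp⟩
      show φ _ = 0
      rw [hadd, phi_inv φ hadd, hinv g ⟨n, hn⟩ ⟨g * n * g⁻¹, hgn⟩ rfl, add_neg_cancel]
  have hle := Subgroup.topologicalClosure_minimal _ (Subgroup.closure_le K |>.mpr hsub) hKclosed
  obtain ⟨a, ha, hax⟩ := hle hx
  have : a = x := Subtype.ext hax
  rwa [this] at ha



/-- Separation: a continuous `G`-invariant character not vanishing at `x ∉ D`. -/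
private lemma exists_separating_char [TotallyDisconnectedSpace G]
    (N : Subgroup G) [N.Normal] (hNclosed : IsClosed (N : Set G))
    {m : ℕ} (D : Subgroup G)
    (hDclosed : IsClosed (D : Set G))
    (hpow : ∀ n ∈ N, n ^ m ∈ D)
    (hcomm : ∀ g : G, ∀ n ∈ N, g * n * g⁻¹ * n⁻¹ ∈ D)
    (hm : m ≠ 0)
    {x : ↥N} (hx : (x : G) ∉ D) :
    ∃ φ : ↥N → ZMod m,
      ((∀ a b : ↥N, φ (a * b) = φ a + φ b) ∧ Continuous φ ∧
        ∀ (g : G) (a b : ↥N), (b : G) = g * (a : G) * g⁻¹ → φ b = φ a) ∧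
      (∀ a : ↥N, (a : G) ∈ D → φ a = 0) ∧ φ x ≠ 0 := by
  haveI : CompactSpace ↥N := isCompact_iff_compactSpace.mp hNclosed.isCompact
  set D' : Subgroup ↥N := D.subgroupOf N with hD'
  have hD'closed : IsClosed (D' : Set ↥N) := by
    exact IsClosed.preimage continuous_subtype_val hDclosed
  have hxD' : x ∉ D' := hx
  -- commutators of elements of `N` lie in `D'`
  have hcommD' : ∀ a b : ↥N, a * b * a⁻¹ * b⁻¹ ∈ D' := by
    intro a b
    show ((a * b * a⁻¹ * b⁻¹ : ↥N) : G) ∈ D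
    push_cast
    exact hcomm a b b.2
  -- find an open subgroup W with x • W ∩ D' = ∅
  have hUopen : IsOpen ((D' : Set ↥N)ᶜ) := hD'closed.isOpen_compl
  have hxU : (x : ↥N) ∈ (D' : Set ↥N)ᶜ := hxD'
  have h1U : (1 : ↥N) ∈ x⁻¹ • ((D' : Set ↥N)ᶜ) := ⟨x, hxU, by simp⟩
  obtain ⟨C, hCclopen, h1C, hCsub⟩ :=
    compact_exists_isClopen_in_isOpen (hUopen.smul x⁻¹) h1U
  obtain ⟨W, hW⟩ := IsTopologicalGroup.exist_openSubgroup_sub_clopen_nhds_of_one hCclopen h1C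
  have hxW : ∀ w ∈ W.toSubgroup, x * w ∉ D' := by
    intro w hw hmem
    obtain ⟨z, hz, hzw⟩ := hCsub (hW hw)
    have hzeq : z = x * w := by
      have h' : x⁻¹ * z = w := hzw
      rw [← h']; group
    exact hz (by rwa [← hzeq] at hmem)
  -- the subgroup V = D' ⊔ W
  set V : Subgroup ↥N := D' ⊔ W.toSubgroup with hV
  haveI hD'norm : D'.Normal := by
    constructor
    intro d hd n
    have h1 : n * d * n⁻¹ * d⁻¹ ∈ D' := hcommD' n d
    have : (n * d * n⁻¹ * d⁻¹) * d ∈ D' := D'.mul_mem h1 hd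
    simpa [mul_assoc] using this
  have hVopen : IsOpen (V : Set ↥N) := Subgroup.isOpen_mono le_sup_right W.isOpen
  have hxV : x ∉ V := by
    intro hmem
    rw [hV] at hmem
    have hmem2 : (x : ↥N) ∈ (↑(D' ⊔ W.toSubgroup) : Set ↥N) := hmem
    rw [Subgroup.normal_mul] at hmem2
    obtain ⟨d, hd, w, hw, hdw⟩ := hmem2
    refine hxW w⁻¹ (W.toSubgroup.inv_mem hw) ?_
    have heq : x * w⁻¹ = d := by rw [← hdw]; group
    rw [heq]; exact hd
  -- the finite abelian quotient N/V
  have hD'leV : D' ≤ V := le_sup_left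
  have hpowV : ∀ a : ↥N, a ^ m ∈ V := by
    intro a
    refine hD'leV ?_
    show ((a ^ m : ↥N) : G) ∈ D
    push_cast
    exact hpow a a.2
  haveI hVnorm : V.Normal := by
    constructor
    intro v hv n
    have h2 : (n * v * n⁻¹ * v⁻¹) * v ∈ V := V.mul_mem (hD'leV (hcommD' n v)) hv
    simpa [mul_assoc] using h2
  haveI : Finite (↥N ⧸ V) := Subgroup.quotient_finite_of_isOpen V hVopen
  letI : CommGroup (↥N ⧸ V) :=
    { (inferInstance : Group (↥N ⧸ V)) with
      mul_comm := by
        intro q r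
        induction q using QuotientGroup.induction_on with | _ a =>
        induction r using QuotientGroup.induction_on with | _ b =>
        rw [← QuotientGroup.mk_mul, ← QuotientGroup.mk_mul, QuotientGroup.eq]
        have heq : (a * b)⁻¹ * (b * a) = b⁻¹ * a⁻¹ * (b⁻¹)⁻¹ * (a⁻¹)⁻¹ := by group
        rw [heq]
        exact hD'leV (hcommD' b⁻¹ a⁻¹) }
  have htor : ∀ q : Additive (↥N ⧸ V), m • q = 0 := by
    intro q
    have h1 : (q.toMul) ^ m = 1 := by
      induction (q.toMul) using QuotientGroup.induction_on with | _ a =>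
      rw [← QuotientGroup.mk_pow]
      exact (QuotientGroup.eq_one_iff _).mpr (hpowV a)
    calc m • q = m • Additive.ofMul q.toMul := rfl
      _ = Additive.ofMul (q.toMul ^ m) := (ofMul_pow m _).symm
      _ = 0 := by rw [h1]; rfl
  have hne : Additive.ofMul ((QuotientGroup.mk x : ↥N ⧸ V)) ≠ 0 := by
    intro h
    have : (QuotientGroup.mk x : ↥N ⧸ V) = 1 := h
    exact hxV ((QuotientGroup.eq_one_iff _).mp this)
  obtain ⟨f, hf⟩ := exists_addHom_ne_zero hm htor hne
  set φ : ↥N → ZMod m := fun a => f (Additive.ofMul (QuotientGroup.mk a : ↥N ⧸ V)) with hφ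
  have hφadd : ∀ a b : ↥N, φ (a * b) = φ a + φ b := by
    intro a b
    show f _ = f _ + f _
    rw [← map_add]
    congr 1
  have hφV : ∀ a : ↥N, a ∈ V → φ a = 0 := by
    intro a ha
    show f _ = 0
    rw [(QuotientGroup.eq_one_iff _).mpr ha]
    exact map_zero f
  have hφcont : Continuous φ := by
    refine IsLocallyConstant.continuous (fun s => ?_)
    rw [isOpen_iff_mem_nhds]
    intro y hy
    have hset : ((y * ·) '' (V : Set ↥N)) ∈ nhds y :=
      IsOpen.mem_nhds ((Homeomorph.mulLeft y).isOpen_image.mpr hVopen)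
        ⟨1, V.one_mem, mul_one y⟩
    refine Filter.mem_of_superset hset ?_
    rintro z ⟨v, hv, rfl⟩
    show φ (y * v) ∈ s
    have heq : φ (y * v) = φ y + φ v := hφadd y v
    rw [heq, hφV v hv, add_zero]
    exact hy
  have hφinv : ∀ (g : G) (a b : ↥N), (b : G) = g * (a : G) * g⁻¹ → φ b = φ a := by
    intro g a b hba
    have hba' : b * a⁻¹ ∈ V := by
      refine hD'leV ?_
      show ((b * a⁻¹ : ↥N) : G) ∈ D
      push_cast
      rw [hba]
      exact hcomm g a a.2
    have h3 : φ b = φ ((b * a⁻¹) * a) := by rw [inv_mul_cancel_right]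
    rw [h3, hφadd, hφV _ hba', zero_add]
  refine ⟨φ, ⟨hφadd, hφcont, hφinv⟩, fun a ha => hφV a (hD'leV ha), hf⟩

end Aux
/-- Let `G` be profinite, `N` a closed normal subgroup, `m ≥ 2`.
Let `D` be the topological closure of the subgroup generated by `m`-th powers of
elements of `N` and commutators `[g,n]`, `g ∈ G`, `n ∈ N`.  Then `D` is a closed normal
subgroup of `G` contained in `N`, and the substitution pairing
`N/D × H → ZMod m`, `(nD, φ) ↦ φ(n)`, where `H` is the group of `G`-invariant continuous
homomorphisms `N → ZMod m`, is well defined and perfect. -/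
theorem stmt_9 {G : Type*} [Group G] [TopologicalSpace G] [IsTopologicalGroup G]
    [CompactSpace G] [T2Space G] [TotallyDisconnectedSpace G]
    (N : Subgroup G) [N.Normal] (hNclosed : IsClosed (N : Set G))
    (m : ℕ) (hm : 2 ≤ m)
    (D : Subgroup G)
    (hD : D = (Subgroup.closure ({x : G | ∃ n ∈ N, x = n ^ m} ∪
        {x : G | ∃ g : G, ∃ n ∈ N, x = g * n * g⁻¹ * n⁻¹})).topologicalClosure)
    (Hset : Set (↥N → ZMod m))
    (hHset : Hset = {φ | (∀ a b : ↥N, φ (a * b) = φ a + φ b) ∧ Continuous φ ∧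
        ∀ (g : G) (a b : ↥N), (b : G) = g * (a : G) * g⁻¹ → φ b = φ a}) :
    IsClosed (D : Set G) ∧ D.Normal ∧ D ≤ N ∧
    ∃ F : (↥N ⧸ D.subgroupOf N) → ↥Hset → ZMod m,
      -- the pairing `(nD, φ) ↦ φ(n)` is well defined:
      (∀ (x : ↥N) (φ : ↥Hset), F (QuotientGroup.mk x) φ = φ.1 x) ∧
      -- the induced map `N/D → Hom(H, ZMod m)` is bijective:
      (∀ x y : ↥N ⧸ D.subgroupOf N, (∀ φ : ↥Hset, F x φ = F y φ) → x = y) ∧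
      (∀ χ : ↥Hset → ZMod m,
        (∀ (φ ψ : ↥Hset) (h : φ.1 + ψ.1 ∈ Hset), χ ⟨φ.1 + ψ.1, h⟩ = χ φ + χ ψ) →
        ∃ x : ↥N ⧸ D.subgroupOf N, ∀ φ, χ φ = F x φ) ∧
      -- the induced map `H → Hom_cont(N/D, ZMod m)` is bijective:
      (∀ φ ψ : ↥Hset, (∀ x, F x φ = F x ψ) → φ = ψ) ∧
      (∀ ξ : (↥N ⧸ D.subgroupOf N) → ZMod m,
        (∀ a b : ↥N, ξ (QuotientGroup.mk (a * b)) =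
          ξ (QuotientGroup.mk a) + ξ (QuotientGroup.mk b)) →
        Continuous ξ → ∃ φ : ↥Hset, ∀ x, ξ x = F x φ) := by
  classical
  haveI : NeZero m := ⟨by omega⟩
  have hm0 : m ≠ 0 := by omega
  -- the generating set
  set S : Set G := {x : G | ∃ n ∈ N, x = n ^ m} ∪
      {x : G | ∃ g : G, ∃ n ∈ N, x = g * n * g⁻¹ * n⁻¹} with hS
  have hSN : S ⊆ (N : Set G) := by
    rintro y (⟨n, hn, rfl⟩ | ⟨g, n, hn, rfl⟩)
    · exact N.pow_mem hn m
    · exact N.mul_mem (‹N.Normal›.conj_mem n hn g) (N.inv_mem hn)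
  have hDclosed : IsClosed (D : Set G) := by
    rw [hD]; exact Subgroup.isClosed_topologicalClosure _
  have hDN : D ≤ N := by
    rw [hD]
    exact Subgroup.topologicalClosure_minimal _ ((Subgroup.closure_le N).mpr hSN) hNclosed
  haveI hDnormal : D.Normal := by
    haveI hcl : (Subgroup.closure S).Normal := by
      constructor
      intro a ha g
      induction ha using Subgroup.closure_induction with
      | mem y hy =>
          rcases hy with ⟨n, hn, rfl⟩ | ⟨h, n, hn, rfl⟩
          · apply Subgroup.subset_closure
            refine Or.inl ⟨g * n * g⁻¹, ‹N.Normal›.conj_mem n hn g, ?_⟩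
            rw [conj_pow]
          · have hA : (g * h) * n * (g * h)⁻¹ * n⁻¹ ∈ Subgroup.closure S :=
              Subgroup.subset_closure (Or.inr ⟨g * h, n, hn, rfl⟩)
            have hB : g * n * g⁻¹ * n⁻¹ ∈ Subgroup.closure S :=
              Subgroup.subset_closure (Or.inr ⟨g, n, hn, rfl⟩)
            have heq : g * (h * n * h⁻¹ * n⁻¹) * g⁻¹ =
                ((g * h) * n * (g * h)⁻¹ * n⁻¹) * (g * n * g⁻¹ * n⁻¹)⁻¹ := by group
            rw [heq]
            exact Subgroup.mul_mem _ hA (Subgroup.inv_mem _ hB)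
      | one => simpa using Subgroup.one_mem _
      | mul x y hx hy ihx ihy =>
          have heq : g * (x * y) * g⁻¹ = (g * x * g⁻¹) * (g * y * g⁻¹) := by group
          rw [heq]; exact Subgroup.mul_mem _ ihx ihy
      | inv x hx ihx =>
          have heq : g * x⁻¹ * g⁻¹ = (g * x * g⁻¹)⁻¹ := by group
          rw [heq]; exact Subgroup.inv_mem _ ihx
    rw [hD]
    exact Subgroup.is_normal_topologicalClosure _
  have hpow' : ∀ n ∈ N, n ^ m ∈ D := by
    intro n hn
    rw [hD]
    exact Subgroup.le_topologicalClosure _ (Subgroup.subset_closure (Or.inl ⟨n, hn, rfl⟩))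
  have hcomm' : ∀ g : G, ∀ n ∈ N, g * n * g⁻¹ * n⁻¹ ∈ D := by
    intro g n hn
    rw [hD]
    exact Subgroup.le_topologicalClosure _ (Subgroup.subset_closure (Or.inr ⟨g, n, hn, rfl⟩))
  -- accessors for Hset membership
  have hprop : ∀ φ : ↥Hset, (∀ a b : ↥N, φ.1 (a * b) = φ.1 a + φ.1 b) ∧ Continuous φ.1 ∧
      ∀ (g : G) (a b : ↥N), (b : G) = g * (a : G) * g⁻¹ → φ.1 b = φ.1 a := by
    intro φ
    exact (Set.ext_iff.mp hHset φ.1).mp φ.2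
  have hmem : ∀ f : ↥N → ZMod m, (∀ a b : ↥N, f (a * b) = f a + f b) → Continuous f →
      (∀ (g : G) (a b : ↥N), (b : G) = g * (a : G) * g⁻¹ → f b = f a) → f ∈ Hset := by
    intro f h1 h2 h3
    exact (Set.ext_iff.mp hHset f).mpr ⟨h1, h2, h3⟩
  have hvan2 : ∀ (φ : ↥Hset) (x : ↥N), (x : G) ∈ D → φ.1 x = 0 := by
    intro φ x hx
    refine vanishes_on_D N hNclosed φ.1 (hprop φ).1 (hprop φ).2.1 (hprop φ).2.2 ?_
    rw [← hD]
    exact hx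
  refine ⟨hDclosed, hDnormal, hDN,
    ⟨fun q φ => Quotient.liftOn' q (fun x => φ.1 x) (fun a b h => ?wd),
      fun x φ => rfl, ?inj1, ?surj1, ?inj2, ?surj2⟩⟩
  case wd =>
    have h' : a⁻¹ * b ∈ D.subgroupOf N := (QuotientGroup.leftRel_apply).mp h
    have h0 : φ.1 (a⁻¹ * b) = 0 := hvan2 φ _ h'
    show φ.1 a = φ.1 b
    have hb : φ.1 b = φ.1 (a * (a⁻¹ * b)) := by rw [mul_inv_cancel_left]
    rw [hb, (hprop φ).1, h0, add_zero]
  case inj1 =>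
    intro x y hxy
    obtain ⟨a, rfl⟩ := QuotientGroup.mk_surjective x
    obtain ⟨b, rfl⟩ := QuotientGroup.mk_surjective y
    rw [QuotientGroup.eq]
    by_contra hab
    have hab' : ((a⁻¹ * b : ↥N) : G) ∉ D := hab
    obtain ⟨φ, hφmem, hφvan, hφne⟩ :=
      exists_separating_char N hNclosed D hDclosed hpow' hcomm' hm0 hab'
    have h1 := hxy ⟨φ, hmem φ hφmem.1 hφmem.2.1 hφmem.2.2⟩
    have h1' : φ a = φ b := h1
    apply hφne
    have h2 : φ (a⁻¹ * b) = φ a⁻¹ + φ b := hφmem.1 _ _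
    rw [h2, phi_inv φ hφmem.1, ← h1', neg_add_cancel]
  case inj2 =>
    intro φ ψ h
    apply Subtype.ext
    funext a
    exact h (QuotientGroup.mk a)
  case surj2 =>
    intro ξ hξadd hξcont
    have hξ1 : ξ (QuotientGroup.mk 1) = 0 := by
      have h := hξadd 1 1
      rw [mul_one] at h
      exact left_eq_add.mp h
    set f : ↥N → ZMod m := fun a => ξ (QuotientGroup.mk a) with hf
    have hfmem : f ∈ Hset := by
      refine hmem f (fun a b => hξadd a b) (hξcont.comp continuous_quotient_mk') ?_
      intro g a b hba
      have hV : (QuotientGroup.mk b : ↥N ⧸ D.subgroupOf N) = QuotientGroup.mk a := by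
        rw [QuotientGroup.eq]
        show ((b⁻¹ * a : ↥N) : G) ∈ D
        push_cast
        rw [hba]
        have heq : ((g * (a : G) * g⁻¹)⁻¹ * a) = g * (a : G)⁻¹ * g⁻¹ * ((a : G)⁻¹)⁻¹ := by
          group
        rw [heq]
        exact hcomm' g _ (N.inv_mem a.2)
      show ξ (QuotientGroup.mk b) = ξ (QuotientGroup.mk a)
      rw [hV]
    refine ⟨⟨f, hfmem⟩, ?_⟩
    intro x
    obtain ⟨a, rfl⟩ := QuotientGroup.mk_surjective x
    rfl
  case surj1 =>
    intro χ hχ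
    have hzmem : (fun _ : ↥N => (0 : ZMod m)) ∈ Hset :=
      hmem _ (fun a b => (add_zero (0 : ZMod m)).symm) continuous_const (fun g a b _ => rfl)
    have hχcongr : ∀ (φ ψ : ↥Hset), φ.1 = ψ.1 → χ φ = χ ψ := fun φ ψ h =>
      congrArg χ (Subtype.ext h)
    have haddmem : ∀ f f' : ↥N → ZMod m, f ∈ Hset → f' ∈ Hset → f + f' ∈ Hset := by
      intro f f' hf hf'
      have h1 := (Set.ext_iff.mp hHset f).mp hf
      have h2 := (Set.ext_iff.mp hHset f').mp hf'
      refine hmem _ (fun a b => ?_) (h1.2.1.add h2.2.1) (fun g a b hba => ?_)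
      · show f (a * b) + f' (a * b) = (f a + f' a) + (f b + f' b)
        rw [h1.1 a b, h2.1 a b]; ring
      · show f b + f' b = f a + f' a
        rw [h1.2.2 g a b hba, h2.2.2 g a b hba]
    have hχ0 : χ ⟨fun _ => 0, hzmem⟩ = 0 := by
      have hmem2 : ((fun _ : ↥N => (0 : ZMod m)) + fun _ => 0) ∈ Hset :=
        haddmem _ _ hzmem hzmem
      have h := hχ ⟨_, hzmem⟩ ⟨_, hzmem⟩ hmem2
      have he : χ (⟨(fun _ : ↥N => (0 : ZMod m)) + fun _ => 0, hmem2⟩ : ↥Hset)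
          = χ ⟨fun _ => 0, hzmem⟩ := hχcongr _ _ (by funext n; simp)
      rw [he] at h
      exact left_eq_add.mp h
    have hNS : ∀ (k : ℕ) (φ : ↥Hset), ∃ hms : (fun n : ↥N => (k : ZMod m) * φ.1 n) ∈ Hset,
        χ ⟨fun n => (k : ZMod m) * φ.1 n, hms⟩ = (k : ZMod m) * χ φ := by
      intro k φ
      induction k with
      | zero =>
          have hfe : (fun n : ↥N => ((0 : ℕ) : ZMod m) * φ.1 n) = fun _ : ↥N => (0 : ZMod m) := by
            funext n; rw [Nat.cast_zero, zero_mul]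
          refine ⟨by rw [hfe]; exact hzmem, ?_⟩
          rw [hχcongr _ ⟨_, hzmem⟩ hfe, hχ0, Nat.cast_zero, zero_mul]
      | succ k ih =>
          obtain ⟨h1, h2⟩ := ih
          have hfe : (fun n : ↥N => ((k + 1 : ℕ) : ZMod m) * φ.1 n)
              = (fun n : ↥N => (k : ZMod m) * φ.1 n) + φ.1 := by
            funext n
            show ((k + 1 : ℕ) : ZMod m) * φ.1 n = (k : ZMod m) * φ.1 n + φ.1 n
            push_cast
            ring
          have hms : (fun n : ↥N => ((k + 1 : ℕ) : ZMod m) * φ.1 n) ∈ Hset := by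
            rw [hfe]; exact haddmem _ _ h1 φ.2
          refine ⟨hms, ?_⟩
          have hstep := hχ ⟨_, h1⟩ φ (haddmem _ _ h1 φ.2)
          rw [hχcongr ⟨_, hms⟩ ⟨_, haddmem _ _ h1 φ.2⟩ hfe, hstep, h2]
          push_cast
          ring
    -- finite subfamilies admit a common realizer
    have key : ∀ u : Finset ↥Hset, ∃ n : ↥N, ∀ φ : ↥Hset, φ ∈ u → φ.1 n = χ φ := by
      intro u
      have hSUM : ∀ (s : Finset ↥u) (g : ↥u → ↥Hset),
          ∃ hms : (fun n : ↥N => ∑ i ∈ s, (g i).1 n) ∈ Hset,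
            χ ⟨fun n => ∑ i ∈ s, (g i).1 n, hms⟩ = ∑ i ∈ s, χ (g i) := by
        intro s g
        induction s using Finset.cons_induction with
        | empty =>
            have hms0 : (fun n : ↥N => ∑ i ∈ (∅ : Finset ↥u), (g i).1 n) ∈ Hset := by
              have hfe : (fun n : ↥N => ∑ i ∈ (∅ : Finset ↥u), (g i).1 n)
                  = fun _ : ↥N => (0 : ZMod m) := by
                funext n; exact Finset.sum_empty
              rw [hfe]; exact hzmem
            refine ⟨hms0, ?_⟩
            rw [Finset.sum_empty]
            have he : χ ⟨fun n : ↥N => ∑ i ∈ (∅ : Finset ↥u), (g i).1 n, hms0⟩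
                = χ ⟨fun _ => 0, hzmem⟩ :=
              hχcongr _ _ (by
                funext n
                show (∑ i ∈ (∅ : Finset ↥u), (g i).1 n) = (0 : ZMod m)
                exact Finset.sum_empty)
            exact he.trans hχ0
        | cons a s ha ih =>
            obtain ⟨h1, h2⟩ := ih
            have hms : (fun n : ↥N => ∑ i ∈ Finset.cons a s ha, (g i).1 n) ∈ Hset := by
              have hfeq : (fun n : ↥N => ∑ i ∈ Finset.cons a s ha, (g i).1 n)
                  = (g a).1 + fun n => ∑ i ∈ s, (g i).1 n := by
                funext n
                rw [Finset.sum_cons]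
                rfl
              rw [hfeq]
              exact haddmem _ _ (g a).2 h1
            refine ⟨hms, ?_⟩
            have hstep := hχ (g a) ⟨_, h1⟩ (haddmem _ _ (g a).2 h1)
            have he : χ ⟨fun n => ∑ i ∈ Finset.cons a s ha, (g i).1 n, hms⟩
                = χ ⟨(g a).1 + fun n => ∑ i ∈ s, (g i).1 n, haddmem _ _ (g a).2 h1⟩ :=
              hχcongr _ _ (by
                funext n
                show (∑ i ∈ Finset.cons a s ha, (g i).1 n) = (g a).1 n + ∑ i ∈ s, (g i).1 n
                rw [Finset.sum_cons])
            rw [Finset.sum_cons, he, hstep, h2]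
      set A : AddSubgroup ((↥u) → ZMod m) :=
        { carrier := Set.range (fun (n : ↥N) => fun i : ↥u => (i : ↥Hset).1 n)
          zero_mem' := ⟨1, funext fun i => phi_one _ (hprop i.1).1⟩
          add_mem' := by
            rintro v w ⟨n, rfl⟩ ⟨n', rfl⟩
            exact ⟨n * n', funext fun i => (hprop i.1).1 n n'⟩
          neg_mem' := by
            rintro v ⟨n, rfl⟩
            exact ⟨n⁻¹, funext fun i => phi_inv _ (hprop i.1).1 n⟩ } with hA
      have hcA : (fun i : ↥u => χ i.1) ∈ A := by
        by_contra hc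
        haveI : Finite ((↥u → ZMod m) ⧸ A) := Quotient.finite _
        have htorQ : ∀ v : (↥u → ZMod m) ⧸ A, m • v = 0 := by
          intro v
          obtain ⟨w, rfl⟩ := QuotientAddGroup.mk_surjective v
          have hw : m • w = 0 := by
            funext i
            show m • w i = 0
            rw [nsmul_eq_mul, ZMod.natCast_self, zero_mul]
          rw [← QuotientAddGroup.mk_nsmul, hw, QuotientAddGroup.mk_zero]
        have hc0 : (QuotientAddGroup.mk (fun i : ↥u => χ i.1) : (↥u → ZMod m) ⧸ A) ≠ 0 :=
          fun h => hc ((QuotientAddGroup.eq_zero_iff _).mp h)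
        obtain ⟨f, hf⟩ := exists_addHom_ne_zero hm0 htorQ hc0
        set T : (↥u → ZMod m) →+ ZMod m := f.comp (QuotientAddGroup.mk' A) with hT
        set e1 : ↥u → (↥u → ZMod m) := fun i => Pi.single i (1 : ZMod m) with he1
        have hTA : ∀ v ∈ A, T v = 0 := by
          intro v hv
          show f (QuotientAddGroup.mk' A v) = 0
          rw [QuotientAddGroup.mk'_apply, (QuotientAddGroup.eq_zero_iff _).mpr hv, map_zero]
        have hTc : T (fun i : ↥u => χ i.1) ≠ 0 := hf
        have hTexp : ∀ v : ↥u → ZMod m, T v = ∑ i, v i * T (e1 i) := by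
          intro v
          conv_lhs => rw [← Finset.univ_sum_single v]
          rw [map_sum]
          refine Finset.sum_congr rfl fun i _ => ?_
          have h1 : Pi.single i (v i) = (v i).val • e1 i := by
            rw [he1, ← Pi.single_smul, nsmul_eq_mul, mul_one, ZMod.natCast_rightInverse (v i)]
          rw [h1, map_nsmul, nsmul_eq_mul, ZMod.natCast_rightInverse (v i)]
        have hsc := fun i : ↥u => hNS (T (e1 i)).val i.1
        choose hscm hscv using hsc
        obtain ⟨hmemS, hχS⟩ := hSUM Finset.univ (fun i : ↥u => (⟨_, hscm i⟩ : ↥Hset))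
        have hfun0 : (fun n : ↥N => ∑ i : ↥u,
            ((T (e1 i)).val : ZMod m) * (i : ↥Hset).1 n)
            = fun _ : ↥N => (0 : ZMod m) := by
          funext n
          have hcomm2 : ∀ i : ↥u, ((T (e1 i)).val : ZMod m) * (i : ↥Hset).1 n
              = (i : ↥Hset).1 n * T (e1 i) := by
            intro i
            rw [ZMod.natCast_rightInverse, mul_comm]
          rw [Finset.sum_congr rfl (fun i _ => hcomm2 i), ← hTexp]
          exact hTA _ ⟨n, rfl⟩
        have hz := hχcongr ⟨_, hmemS⟩ ⟨_, hzmem⟩ hfun0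
        apply hTc
        rw [hTexp]
        have hterm : ∀ i : ↥u, χ (i : ↥Hset) * T (e1 i)
            = χ (⟨_, hscm i⟩ : ↥Hset) := by
          intro i
          rw [hscv i, ZMod.natCast_rightInverse, mul_comm]
        rw [Finset.sum_congr rfl (fun i _ => hterm i), ← hχS]
        exact hz.trans hχ0
      obtain ⟨n, hn⟩ := hcA
      exact ⟨n, fun φ hφ => congrFun hn ⟨φ, hφ⟩⟩
    -- compactness
    haveI : CompactSpace ↥N := isCompact_iff_compactSpace.mp hNclosed.isCompact
    have main : ∃ n : ↥N, ∀ φ : ↥Hset, φ.1 n = χ φ := by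
      by_contra hcon
      push_neg at hcon
      have hclosed : ∀ φ : ↥Hset, IsClosed {n : ↥N | φ.1 n = χ φ} := fun φ =>
        IsClosed.preimage (hprop φ).2.1 isClosed_singleton
      have hempty : ((Set.univ : Set ↥N) ∩ ⋂ φ : ↥Hset, {n | φ.1 n = χ φ}) = ∅ := by
        ext n
        simp only [Set.mem_inter_iff, Set.mem_iInter, Set.mem_setOf_eq, Set.mem_empty_iff_false,
          Set.mem_univ, true_and, iff_false, not_forall]
        obtain ⟨φ, hφ⟩ := hcon n
        exact ⟨φ, hφ⟩
      obtain ⟨u, hu⟩ := IsCompact.elim_finite_subfamily_closed isCompact_univ _ hclosed hempty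
      obtain ⟨n, hn⟩ := key u
      have hmemn : n ∈ (Set.univ : Set ↥N) ∩ ⋂ φ ∈ u, {n : ↥N | φ.1 n = χ φ} := by
        refine ⟨trivial, ?_⟩
        simp only [Set.mem_iInter, Set.mem_setOf_eq]
        exact fun φ hφ => hn φ hφ
      rw [hu] at hmemn
      exact hmemn
    obtain ⟨n, hn⟩ := main
    exact ⟨QuotientGroup.mk n, fun φ => (hn φ).symm⟩
end

section
/- Fix a finite abelian group Z of exponent dividing m and a nonempty family of central extensions (U_ω, barU_ω, λ_ω)_{ω∈Ω} of profinite groups with kernel isomorphic to Z. Let G be a profinite group and let N₁ ⊆ N₂ be closed normal subgroups of G with N₂ ⊆ barT(G). Let π₁: G → G/N₁ be the quotient homomorphism. Then the subgroup of G generated by N₁ ∪ {nᵐ : n ∈ N₂} ∪ {[g,n] : g ∈ G, n ∈ N₂} is contained in N₂ ∩ π₁⁻¹(T(G/N₁)). -/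
/-- `TU G U` is the intersection of the kernels of all continuous homomorphisms
`ρ : G → U`, denoted `T^U(G)` in the paper. -/
def TU (G : Type*) [Group G] [TopologicalSpace G] (U : Type*) [Group U] [TopologicalSpace U] :
    Subgroup G :=
  ⨅ ρ : {ρ : G →* U // Continuous ρ}, (ρ : G →* U).ker

/-- Fix a finite abelian group `Z` of exponent dividing `m` and a
nonempty family of central extensions `1 → Z → U_ω → barU_ω → 1` of profinite groups.
Let `G` be profinite and `N₁ ⊆ N₂` closed normal subgroups with `N₂ ⊆ barT(G)`.  Then
the subgroup generated by `N₁`, the `m`-th powers of elements of `N₂`, and the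
commutators `[g,n]` with `g ∈ G`, `n ∈ N₂`, is contained in `N₂ ∩ π₁⁻¹(T(G/N₁))`. -/
theorem stmt_10 {m : ℕ} {Z : Type*} [CommGroup Z] [Finite Z] (hZexp : ∀ z : Z, z ^ m = 1)
    {Ω : Type*} [Nonempty Ω] (Uf barU : Ω → Type*)
    [∀ ω, Group (Uf ω)] [∀ ω, TopologicalSpace (Uf ω)] [∀ ω, IsTopologicalGroup (Uf ω)]
    [∀ ω, CompactSpace (Uf ω)] [∀ ω, T2Space (Uf ω)] [∀ ω, TotallyDisconnectedSpace (Uf ω)]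
    [∀ ω, Group (barU ω)] [∀ ω, TopologicalSpace (barU ω)] [∀ ω, IsTopologicalGroup (barU ω)]
    [∀ ω, CompactSpace (barU ω)] [∀ ω, T2Space (barU ω)] [∀ ω, TotallyDisconnectedSpace (barU ω)]
    (lam : ∀ ω, Uf ω →* barU ω) (hlamcont : ∀ ω, Continuous (lam ω))
    (hlamsurj : ∀ ω, Function.Surjective (lam ω))
    (hcentral : ∀ ω, (lam ω).ker ≤ Subgroup.center (Uf ω))
    (hkerZ : ∀ ω, Nonempty ((lam ω).ker ≃* Z))
    {G : Type*} [Group G] [TopologicalSpace G] [IsTopologicalGroup G]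
    [CompactSpace G] [T2Space G] [TotallyDisconnectedSpace G]
    (N₁ N₂ : Subgroup G) [N₁.Normal] [N₂.Normal]
    (hN₁closed : IsClosed (N₁ : Set G)) (hN₂closed : IsClosed (N₂ : Set G))
    (h₁₂ : N₁ ≤ N₂) (hN₂ : N₂ ≤ ⨅ ω, TU G (barU ω)) :
    Subgroup.closure ((N₁ : Set G) ∪ {x : G | ∃ n ∈ N₂, x = n ^ m} ∪
        {x : G | ∃ g : G, ∃ n ∈ N₂, x = g * n * g⁻¹ * n⁻¹})
      ≤ N₂ ⊓ Subgroup.comap (QuotientGroup.mk' N₁) (⨅ ω, TU (G ⧸ N₁) (Uf ω)) := by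
  rw [Subgroup.closure_le]
  intro x hx
  -- key fact: for each ω and continuous ρ : G⧸N₁ → Uf ω, the composite kills N₂ into ker(lam ω)
  have key : ∀ (ω : Ω) (ρ : {ρ : G ⧸ N₁ →* Uf ω // Continuous ρ}) (n : G), n ∈ N₂ →
      (ρ : (G ⧸ N₁) →* Uf ω) (QuotientGroup.mk' N₁ n) ∈ (lam ω).ker := by
    intro ω ρ n hn
    have hσc : Continuous ((ρ : (G ⧸ N₁) →* Uf ω).comp (QuotientGroup.mk' N₁)) :=
      ρ.2.comp continuous_quot_mk
    have hbar : n ∈ TU G (barU ω) := (Subgroup.mem_iInf.mp (hN₂ hn)) ω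
    have := Subgroup.mem_iInf.mp hbar
      ⟨(lam ω).comp ((ρ : (G ⧸ N₁) →* Uf ω).comp (QuotientGroup.mk' N₁)),
        (hlamcont ω).comp hσc⟩
    simpa [MonoidHom.mem_ker] using this
  rw [SetLike.mem_coe, Subgroup.mem_inf]
  constructor
  · rcases hx with (hx | hx) | hx
    · exact h₁₂ hx
    · obtain ⟨n, hn, rfl⟩ := hx
      exact pow_mem hn m
    · obtain ⟨g, n, hn, rfl⟩ := hx
      exact mul_mem (Subgroup.Normal.conj_mem ‹N₂.Normal› n hn g) (inv_mem hn)
  · rw [Subgroup.mem_comap]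
    rw [Subgroup.mem_iInf]
    intro ω
    rw [TU, Subgroup.mem_iInf]
    intro ρ
    rw [MonoidHom.mem_ker]
    rcases hx with (hx | hx) | hx
    · have : QuotientGroup.mk' N₁ x = 1 := (QuotientGroup.eq_one_iff x).mpr hx
      rw [this, map_one]
    · obtain ⟨n, hn, rfl⟩ := hx
      have hker := key ω ρ n hn
      obtain ⟨e⟩ := hkerZ ω
      have : (⟨_, hker⟩ : (lam ω).ker) ^ m = 1 := by
        apply e.injective
        rw [map_pow, map_one]
        exact hZexp _
      have h2 : (ρ : (G ⧸ N₁) →* Uf ω) (QuotientGroup.mk' N₁ n) ^ m = 1 :=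
        congrArg Subtype.val this
      rw [map_pow, map_pow, h2]
    · obtain ⟨g, n, hn, rfl⟩ := hx
      have hker := key ω ρ n hn
      have hc := hcentral ω hker
      rw [Subgroup.mem_center_iff] at hc
      simp only [map_mul, map_inv]
      rw [hc ((ρ : (G ⧸ N₁) →* Uf ω) (QuotientGroup.mk' N₁ g))]
      group
end
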